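/- Let ι be a finite index set, m, n : ι → ℝ vectors with 0 ≤ m j ≤ n j for all j, and let 0 < ε ≤ 1 and γ > 0. Assume (1−ε/2) · L2(n) ≤ L2(m). Let i ∈ ι, let n̂ᵢ be a real number with |n̂ᵢ − n i| ≤ (ε/8) · γ · L2(n), and let L̂ be a real number with L̂ ≤ (1+ε) · L2(m). If m i > (1+ε) · γ · L2(m), then n̂ᵢ > γ · L̂ / (1+ε). (Every element that is (1+ε)γ-heavy in the window passes the output filter of the frequent-elements algorithm.) -/

import Mathlib

theorem heavy_element_passes_filter {ι : Type*} [Fintype ι]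
    (m n : ι → ℝ) (hm : ∀ j, 0 ≤ m j) (hmn : ∀ j, m j ≤ n j)
    (ε γ : ℝ) (hε0 : 0 < ε) (hε1 : ε ≤ 1) (hγ : 0 < γ)
    (hL : (1 - ε / 2) * Real.sqrt (∑ j, (n j) ^ 2) ≤ Real.sqrt (∑ j, (m j) ^ 2))
    (i : ι) (nhi Lhat : ℝ)
    (hest : |nhi - n i| ≤ (ε / 8) * γ * Real.sqrt (∑ j, (n j) ^ 2))
    (hLhat : Lhat ≤ (1 + ε) * Real.sqrt (∑ j, (m j) ^ 2))
    (hi : m i > (1 + ε) * γ * Real.sqrt (∑ j, (m j) ^ 2)) :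
    nhi > γ * Lhat / (1 + ε) := by
  set A := Real.sqrt (∑ j, (m j) ^ 2) with hA
  set B := Real.sqrt (∑ j, (n j) ^ 2) with hB
  have hA0 : 0 ≤ A := Real.sqrt_nonneg _
  have hB0 : 0 ≤ B := Real.sqrt_nonneg _
  have hmiA : m i ≤ A := by
    rw [hA, show m i = Real.sqrt ((m i) ^ 2) from (Real.sqrt_sq (hm i)).symm]
    exact Real.sqrt_le_sqrt (Finset.single_le_sum (fun j _ => sq_nonneg (m j))
      (Finset.mem_univ i))
  have hApos : 0 < A := by nlinarith [mul_nonneg (mul_nonneg (by linarith : (0:ℝ) ≤ 1 + ε) hγ.le) hA0]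
  have hB2A : B ≤ 2 * A := by nlinarith
  have habs := abs_le.mp hest
  have hni : m i ≤ n i := hmn i
  rw [gt_iff_lt, div_lt_iff₀ (by linarith : (0:ℝ) < 1 + ε)]
  nlinarith [mul_le_mul_of_nonneg_left hB2A (by positivity : (0:ℝ) ≤ ε / 8 * γ),
    mul_pos hγ hApos, mul_pos (mul_pos hε0 hγ) hApos]
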